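/- Counting bars with one endpoint in a window: let B be a finite barcode and let a < b be real numbers that are not endpoints of any interval of B. Then the homology of the quotient complex C(B)^b / C(B)^a (with the differential induced by ∂) is a vector space of dimension equal to the number of intervals of B (counted with multiplicity) having exactly one endpoint in the open interval (a, b), where the endpoints of an interval (α, β] are α and, when β < +∞, also β. -/

import Mathlib

open scoped Classical

/-- A bar `(a, b]` with `-∞ ≤ a ≤ b ≤ +∞`, encoded by its pair of endpoints in `EReal`. -/
abbrev Bar : Type := EReal × EReal

/-- The index type of the generators of the chain complex `C(B)` associated to the family
of intervals `I`: each interval `(a_j, b_j]` contributes a generator `x_{a_j}`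
(`Bool` value `false`), and also a generator `x_{b_j}` (`Bool` value `true`) when
`b_j < +∞`. -/
def GenIdx {ι : Type} (I : ι → Bar) : Type :=
  {p : ι × Bool // p.2 = true → (I p.1).2 ≠ ⊤}

/-- The filtration value of a generator: `b_j` for the generator `x_{b_j}` and `a_j` for
the generator `x_{a_j}`. -/
def genVal {ι : Type} (I : ι → Bar) (g : GenIdx I) : EReal :=
  if g.val.2 = true then (I g.val.1).2 else (I g.val.1).1

/-- The differential of the chain complex `C(B)`: `∂ x_{b_j} = x_{a_j}`, `∂ x_{a_j} = 0`. -/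
noncomputable def bnd (F : Type) [Field F] {ι : Type} (I : ι → Bar) :
    (GenIdx I → F) →ₗ[F] (GenIdx I → F) where
  toFun f g :=
    if h : g.val.2 = false ∧ (I g.val.1).2 ≠ ⊤ then f ⟨(g.val.1, true), fun _ => h.2⟩ else 0
  map_add' f₁ f₂ := by
    funext g
    by_cases h : g.val.2 = false ∧ (I g.val.1).2 ≠ ⊤
    · simp [h]; rfl
    · simp [h]
  map_smul' c f := by
    funext g
    by_cases h : g.val.2 = false ∧ (I g.val.1).2 ≠ ⊤
    · simp [h]; rfl
    · simp [h]

/-- The filtration level `t` part `C(B)^t` of the chain complex: the span of the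
generators `x_c` with `c < t`. -/
def filtC (F : Type) [Field F] {ι : Type} (I : ι → Bar) (t : ℝ) :
    Submodule F (GenIdx I → F) where
  carrier := {f | ∀ g : GenIdx I, ¬ genVal I g < (t : EReal) → f g = 0}
  add_mem' := by
    intro a b ha hb g hg
    simp [ha g hg, hb g hg]
  zero_mem' := by intro g _; rfl
  smul_mem' := by
    intro c f hf g hg
    simp [hf g hg]


/-- The differential preserves the filtration: `∂(C(B)^u) ⊆ C(B)^u`. -/
theorem bnd_mem_filt (F : Type) [Field F] {ι : Type} (I : ι → Bar)
    (hI : ∀ j, (I j).1 < (I j).2) (u : ℝ) :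
    ∀ x ∈ filtC F I u, bnd F I x ∈ filtC F I u := by
  intro x hx
  show ∀ g : GenIdx I, ¬ genVal I g < (u : EReal) → bnd F I x g = 0
  intro g hg
  show (if h : g.val.2 = false ∧ (I g.val.1).2 ≠ ⊤ then
      x ⟨(g.val.1, true), fun _ => h.2⟩ else 0) = 0
  split_ifs with h
  · apply hx
    intro hlt
    apply hg
    have h2 : genVal I ⟨(g.val.1, true), fun _ => h.2⟩ = (I g.val.1).2 := by
      simp [genVal]
    have h1 : genVal I g = (I g.val.1).1 := by
      simp [genVal, h.1]
    rw [h2] at hlt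
    rw [h1]
    exact lt_trans (hI g.val.1) hlt
  · rfl

/-- The differential of `C(B)` restricted to the subcomplex `C(B)^v`. -/
noncomputable def bndRes (F : Type) [Field F] {ι : Type} (I : ι → Bar)
    (hI : ∀ j, (I j).1 < (I j).2) (v : ℝ) :
    ↥(filtC F I v) →ₗ[F] ↥(filtC F I v) :=
  (bnd F I).restrict (p := filtC F I v) (q := filtC F I v) (bnd_mem_filt F I hI v)

/-- The quotient complex `C(B)^v / C(B)^u`. -/
abbrev relCx (F : Type) [Field F] {ι : Type} (I : ι → Bar) (u v : ℝ) : Type :=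
  ↥(filtC F I v) ⧸ (filtC F I u).comap (filtC F I v).subtype

/-- The differential induced by `∂` on the quotient complex `C(B)^v / C(B)^u`. -/
noncomputable def relBnd (F : Type) [Field F] {ι : Type} (I : ι → Bar)
    (hI : ∀ j, (I j).1 < (I j).2) (u v : ℝ) :
    relCx F I u v →ₗ[F] relCx F I u v :=
  Submodule.mapQ ((filtC F I u).comap (filtC F I v).subtype)
    ((filtC F I u).comap (filtC F I v).subtype)
    (bndRes F I hI v)
    (by
      intro x hx
      have hx' : (x : GenIdx I → F) ∈ filtC F I u := hx
      have : bnd F I (x : GenIdx I → F) ∈ filtC F I u := bnd_mem_filt F I hI u _ hx'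
      exact this)

/-- The homology `ker ∂̄ / im ∂̄` of the quotient complex `C(B)^v / C(B)^u`. -/
noncomputable abbrev relHomology (F : Type) [Field F] {ι : Type} (I : ι → Bar)
    (hI : ∀ j, (I j).1 < (I j).2) (u v : ℝ) : Type :=
  ↥(LinearMap.ker (relBnd F I hI u v)) ⧸
    (LinearMap.range (relBnd F I hI u v)).comap (LinearMap.ker (relBnd F I hI u v)).subtype

/-! ### Auxiliary development -/

instance genIdxFinite {ι : Type} [Finite ι] (I : ι → Bar) : Finite (GenIdx I) :=
  inferInstanceAs (Finite {p : ι × Bool // p.2 = true → (I p.1).2 ≠ ⊤})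

noncomputable instance genIdxFintype {ι : Type} [Fintype ι] (I : ι → Bar) :
    Fintype (GenIdx I) := Fintype.ofFinite _

theorem bnd_apply (F : Type) [Field F] {ι : Type} (I : ι → Bar) (x : GenIdx I → F)
    (g : GenIdx I) :
    bnd F I x g = if h : g.val.2 = false ∧ (I g.val.1).2 ≠ ⊤ then
      x ⟨(g.val.1, true), fun _ => h.2⟩ else 0 := rfl

theorem mem_filtC_iff (F : Type) [Field F] {ι : Type} (I : ι → Bar) (t : ℝ)
    (f : GenIdx I → F) :
    f ∈ filtC F I t ↔ ∀ g : GenIdx I, ¬ genVal I g < (t : EReal) → f g = 0 := Iff.rfl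

/-- The window predicate on generators. -/
def win {ι : Type} (I : ι → Bar) (u v : ℝ) (g : GenIdx I) : Prop :=
  ¬ genVal I g < (u : EReal) ∧ genVal I g < (v : EReal)

/-- Generators in the window `[u, v)`. -/
def WGen {ι : Type} (I : ι → Bar) (u v : ℝ) : Type := {g : GenIdx I // win I u v g}

instance wGenFinite {ι : Type} [Finite ι] (I : ι → Bar) (u v : ℝ) :
    Finite (WGen I u v) := inferInstanceAs (Finite {g : GenIdx I // win I u v g})

noncomputable instance wGenFintype {ι : Type} [Fintype ι] (I : ι → Bar) (u v : ℝ) :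
    Fintype (WGen I u v) := Fintype.ofFinite _

/-- Windowed generators of type `x_{b_j}` whose partner `x_{a_j}` is also in the window. -/
def TGen {ι : Type} (I : ι → Bar) (u v : ℝ) : Type :=
  {t : WGen I u v // t.val.val.2 = true ∧
    ¬ ((I t.val.val.1).1 < (u : EReal)) ∧ (I t.val.val.1).1 < (v : EReal)}

instance tGenFinite {ι : Type} [Finite ι] (I : ι → Bar) (u v : ℝ) :
    Finite (TGen I u v) := inferInstanceAs (Finite {t : WGen I u v // _})

noncomputable instance tGenFintype {ι : Type} [Fintype ι] (I : ι → Bar) (u v : ℝ) :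
    Fintype (TGen I u v) := Fintype.ofFinite _

noncomputable def extZ (F : Type) [Field F] {ι : Type} (I : ι → Bar) (u v : ℝ) :
    (WGen I u v → F) →ₗ[F] (GenIdx I → F) where
  toFun f g := if h : win I u v g then f ⟨g, h⟩ else 0
  map_add' f₁ f₂ := by funext g; by_cases h : win I u v g <;> simp [h] <;> rfl
  map_smul' c f := by funext g; by_cases h : win I u v g <;> simp [h] <;> rfl

noncomputable def resW (F : Type) [Field F] {ι : Type} (I : ι → Bar) (u v : ℝ) :
    (GenIdx I → F) →ₗ[F] (WGen I u v → F) :=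
  LinearMap.funLeft F F Subtype.val

noncomputable def Dw (F : Type) [Field F] {ι : Type} (I : ι → Bar) (u v : ℝ) :
    (WGen I u v → F) →ₗ[F] (WGen I u v → F) :=
  resW F I u v ∘ₗ bnd F I ∘ₗ extZ F I u v

noncomputable def phiMap (F : Type) [Field F] {ι : Type} (I : ι → Bar) (u v : ℝ) :
    ↥(filtC F I v) →ₗ[F] (WGen I u v → F) :=
  resW F I u v ∘ₗ (filtC F I v).subtype

theorem phiMap_apply (F : Type) [Field F] {ι : Type} (I : ι → Bar) (u v : ℝ)
    (x : ↥(filtC F I v)) (s : WGen I u v) : phiMap F I u v x s = x.val s.val := rfl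

theorem ker_phiMap (F : Type) [Field F] {ι : Type} (I : ι → Bar) (u v : ℝ) :
    LinearMap.ker (phiMap F I u v) = (filtC F I u).comap (filtC F I v).subtype := by
  ext x
  simp only [LinearMap.mem_ker, Submodule.mem_comap, Submodule.coe_subtype]
  constructor
  · intro hx
    rw [mem_filtC_iff]
    intro g hg
    by_cases hv : genVal I g < (v : EReal)
    · have := congrFun hx ⟨g, hg, hv⟩
      exact this
    · exact x.prop g hv
  · intro hx
    funext s
    rw [phiMap_apply]
    exact hx s.val s.prop.1
    
theorem phiMap_surj (F : Type) [Field F] {ι : Type} (I : ι → Bar) (u v : ℝ) :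
    Function.Surjective (phiMap F I u v) := by
  intro h
  refine ⟨⟨extZ F I u v h, ?_⟩, ?_⟩
  · intro g hg
    show (if h' : win I u v g then h ⟨g, h'⟩ else 0) = 0
    rw [dif_neg]
    exact fun hw => hg hw.2
  · funext s
    rw [phiMap_apply]
    show (if h' : win I u v s.val then h ⟨s.val, h'⟩ else 0) = h s
    rw [dif_pos s.prop]
    exact congrArg h (Subtype.coe_eta s s.prop)

noncomputable def eEquiv (F : Type) [Field F] {ι : Type} (I : ι → Bar) (u v : ℝ) :
    relCx F I u v ≃ₗ[F] (WGen I u v → F) :=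
  (Submodule.quotEquivOfEq _ _ (ker_phiMap F I u v).symm) ≪≫ₗ
    (phiMap F I u v).quotKerEquivOfSurjective (phiMap_surj F I u v)

theorem eEquiv_mk (F : Type) [Field F] {ι : Type} (I : ι → Bar) (u v : ℝ)
    (x : ↥(filtC F I v)) :
    eEquiv F I u v (Submodule.Quotient.mk x) = phiMap F I u v x := by
  simp [eEquiv, LinearMap.quotKerEquivOfSurjective, LinearEquiv.trans_apply,
    Submodule.quotEquivOfEq_mk, LinearMap.quotKerEquivRange_apply_mk]

theorem genVal_mk_true {ι : Type} (I : ι → Bar) (j : ι) (h : (j, true).2 = true → (I j).2 ≠ ⊤) :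
    genVal I ⟨(j, true), h⟩ = (I j).2 := by simp [genVal]

theorem genVal_mk_false {ι : Type} (I : ι → Bar) (j : ι)
    (h : (j, false).2 = true → (I j).2 ≠ ⊤) :
    genVal I ⟨(j, false), h⟩ = (I j).1 := by simp [genVal]

theorem phiMap_bnd (F : Type) [Field F] {ι : Type} (I : ι → Bar)
    (hI : ∀ j, (I j).1 < (I j).2) (u v : ℝ)
    (x : ↥(filtC F I v)) :
    phiMap F I u v (bndRes F I hI v x) = Dw F I u v (phiMap F I u v x) := by
  funext s
  rw [phiMap_apply]
  have hres : (bndRes F I hI v x : GenIdx I → F) = bnd F I x.val := by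
    rw [bndRes, LinearMap.restrict_apply]
  rw [hres]
  show bnd F I x.val s.val = bnd F I (extZ F I u v (phiMap F I u v x)) s.val
  rw [bnd_apply, bnd_apply]
  split_ifs with h
  · -- compare x.val g' with extZ applied
    set g' : GenIdx I := ⟨(s.val.val.1, true), fun _ => h.2⟩ with hg'
    show x.val g' = (if h' : win I u v g' then (phiMap F I u v x) ⟨g', h'⟩ else 0)
    by_cases hw : win I u v g'
    · exact (dif_pos (t := fun h' => phiMap F I u v x ⟨g', h'⟩) (e := fun _ => 0) hw).symm
    · rw [dif_neg hw]
      rw [win, not_and_or, not_not] at hw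
      rcases hw with hw | hw
      · -- genVal g' = b_j < u : contradict s ∈ window
        exfalso
        rw [hg', genVal_mk_true] at hw
        apply s.prop.1
        have hva : genVal I s.val = (I s.val.val.1).1 := by
          rw [genVal, if_neg]
          rw [h.1]; simp
        rw [hva]
        exact lt_trans (hI s.val.val.1) hw
      · exact x.prop g' hw
  · rfl

theorem eEquiv_comm (F : Type) [Field F] {ι : Type} (I : ι → Bar)
    (hI : ∀ j, (I j).1 < (I j).2) (u v : ℝ) :
    (eEquiv F I u v).toLinearMap ∘ₗ relBnd F I hI u v
      = Dw F I u v ∘ₗ (eEquiv F I u v).toLinearMap := by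
  apply LinearMap.ext
  intro q
  obtain ⟨x, rfl⟩ := Submodule.Quotient.mk_surjective _ q
  simp only [LinearMap.comp_apply, LinearEquiv.coe_coe]
  show eEquiv F I u v (Submodule.Quotient.mk (bndRes F I hI v x)) = Dw F I u v (eEquiv F I u v (Submodule.Quotient.mk x))
  rw [eEquiv_mk, eEquiv_mk, phiMap_bnd]

theorem finrank_homology_aux {F V : Type} [Field F] [AddCommGroup V] [Module F V]
    [FiniteDimensional F V] (D : V →ₗ[F] V) (h2 : ∀ x, D (D x) = 0) :
    Module.finrank F
      (↥(LinearMap.ker D) ⧸ (LinearMap.range D).comap (LinearMap.ker D).subtype)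
      = Module.finrank F V - 2 * Module.finrank F ↥(LinearMap.range D) := by
  have hle : LinearMap.range D ≤ LinearMap.ker D := by
    rintro x ⟨y, rfl⟩
    exact h2 y
  have h1 : Module.finrank F ↥((LinearMap.range D).comap (LinearMap.ker D).subtype)
      = Module.finrank F ↥(LinearMap.range D) :=
    (Submodule.comapSubtypeEquivOfLe hle).finrank_eq
  have h2' := Submodule.finrank_quotient_add_finrank
    ((LinearMap.range D).comap (LinearMap.ker D).subtype)
  have h3 := LinearMap.finrank_range_add_finrank_ker D
  omega

noncomputable def resT (F : Type) [Field F] {ι : Type} (I : ι → Bar) (u v : ℝ) :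
    (WGen I u v → F) →ₗ[F] (TGen I u v → F) :=
  LinearMap.funLeft F F Subtype.val

theorem ker_Dw (F : Type) [Field F] {ι : Type} (I : ι → Bar)
    (hI : ∀ j, (I j).1 < (I j).2) (u v : ℝ) :
    LinearMap.ker (Dw F I u v) = LinearMap.ker (resT F I u v) := by
  ext f
  simp only [LinearMap.mem_ker]
  constructor
  · intro hf
    funext t
    obtain ⟨hb, ha1, ha2⟩ := t.prop
    have hne : (I t.val.val.val.1).2 ≠ ⊤ := t.val.val.prop hb
    have hwt : win I u v ⟨(t.val.val.val.1, true), fun _ => hne⟩ := by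
      have hw := t.val.prop
      rw [win, genVal, if_pos hb] at hw
      exact hw
    have hwfa : win I u v ⟨(t.val.val.val.1, false), by simp⟩ := by
      constructor
      · rw [genVal_mk_false]; exact ha1
      · rw [genVal_mk_false]; exact ha2
    have h0 := congrFun hf ⟨⟨(t.val.val.val.1, false), by simp⟩, hwfa⟩
    have hDs : Dw F I u v f ⟨⟨(t.val.val.val.1, false), by simp⟩, hwfa⟩
        = f ⟨⟨(t.val.val.val.1, true), fun _ => hne⟩, hwt⟩ := by
      show bnd F I (extZ F I u v f) ⟨(t.val.val.val.1, false), by simp⟩ = _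
      erw [bnd_apply]
      rw [dif_pos (show ((t.val.val.val.1, false) : _ × Bool).2 = false
        ∧ (I (t.val.val.val.1, false).1).2 ≠ ⊤ from ⟨rfl, hne⟩)]
      show (if h' : win I u v ⟨(t.val.val.val.1, true), fun _ => hne⟩ then
          f ⟨⟨(t.val.val.val.1, true), fun _ => hne⟩, h'⟩ else 0) = _
      rw [dif_pos hwt]
    have ht : t.val = ⟨⟨(t.val.val.val.1, true), fun _ => hne⟩, hwt⟩ := by
      apply Subtype.ext
      apply Subtype.ext
      exact Prod.ext rfl hb
    show f t.val = 0
    rw [ht]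
    rw [hDs] at h0
    rw [h0]
    rfl
  · intro hf
    funext s
    show bnd F I (extZ F I u v f) s.val = 0
    rw [bnd_apply]
    split_ifs with h
    · show (if h' : win I u v ⟨(s.val.val.1, true), fun _ => h.2⟩ then
          f ⟨⟨(s.val.val.1, true), fun _ => h.2⟩, h'⟩ else 0) = 0
      split_ifs with hw
      · -- this is a TGen element
        have hwa : ¬ ((I s.val.val.1).1 < (u : EReal)) ∧ (I s.val.val.1).1 < (v : EReal) := by
          have hva : genVal I s.val = (I s.val.val.1).1 := by
            rw [genVal, if_neg]; rw [h.1]; simp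
          have := s.prop
          rw [win, hva] at this
          exact this
        have := congrFun hf ⟨⟨⟨(s.val.val.1, true), fun _ => h.2⟩, hw⟩, rfl, hwa.1, hwa.2⟩
        exact this
      · rfl
    · rfl

theorem resT_surj (F : Type) [Field F] {ι : Type} (I : ι → Bar) (u v : ℝ) :
    Function.Surjective (resT F I u v) :=
  LinearMap.funLeft_surjective_of_injective F F _ Subtype.val_injective

/-- Endpoint-in-window predicates on bars. -/
def Q1 {ι : Type} (I : ι → Bar) (u v : ℝ) (j : ι) : Prop :=
  ¬ ((I j).1 < (u : EReal)) ∧ (I j).1 < (v : EReal)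

def Q2 {ι : Type} (I : ι → Bar) (u v : ℝ) (j : ι) : Prop :=
  (I j).2 ≠ ⊤ ∧ ¬ ((I j).2 < (u : EReal)) ∧ (I j).2 < (v : EReal)

noncomputable def splitEquiv {ι : Type} (I : ι → Bar) (u v : ℝ) :
    WGen I u v ≃ ({j : ι // Q1 I u v j} ⊕ {j : ι // Q2 I u v j}) where
  toFun s :=
    if h : s.val.val.2 = true then
      Sum.inr ⟨s.val.val.1, s.val.prop h, by
        have hw := s.prop
        rw [win, genVal, if_pos h] at hw
        exact hw.1, by
        have hw := s.prop
        rw [win, genVal, if_pos h] at hw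
        exact hw.2⟩
    else
      Sum.inl ⟨s.val.val.1, by
        have hw := s.prop
        rw [win, genVal, if_neg h] at hw
        exact hw.1, by
        have hw := s.prop
        rw [win, genVal, if_neg h] at hw
        exact hw.2⟩
  invFun x :=
    match x with
    | Sum.inl ⟨j, h⟩ => ⟨⟨(j, false), by simp⟩, by
        constructor
        · rw [genVal_mk_false]; exact h.1
        · rw [genVal_mk_false]; exact h.2⟩
    | Sum.inr ⟨j, h⟩ => ⟨⟨(j, true), fun _ => h.1⟩, by
        constructor
        · rw [genVal_mk_true]; exact h.2.1
        · rw [genVal_mk_true]; exact h.2.2⟩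
  left_inv := by
    rintro ⟨⟨⟨j, b⟩, hp⟩, hw⟩
    cases b <;> rfl
  right_inv := by
    rintro (⟨j, h⟩ | ⟨j, h⟩) <;> rfl

noncomputable def tEquiv {ι : Type} (I : ι → Bar) (u v : ℝ) :
    TGen I u v ≃ {j : ι // Q1 I u v j ∧ Q2 I u v j} where
  toFun t := ⟨t.val.val.val.1, ⟨t.prop.2.1, t.prop.2.2⟩,
    t.val.val.prop t.prop.1, by
      have hw := t.val.prop
      rw [win, genVal, if_pos t.prop.1] at hw
      exact hw.1, by
      have hw := t.val.prop
      rw [win, genVal, if_pos t.prop.1] at hw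
      exact hw.2⟩
  invFun x := ⟨⟨⟨(x.val, true), fun _ => x.prop.2.1⟩, by
      constructor
      · rw [genVal_mk_true]; exact x.prop.2.2.1
      · rw [genVal_mk_true]; exact x.prop.2.2.2⟩, rfl, x.prop.1.1, x.prop.1.2⟩
  left_inv := by
    rintro ⟨⟨⟨⟨j, b⟩, hp⟩, hw⟩, hb, ha1, ha2⟩
    cases hb
    rfl
  right_inv := by
    rintro ⟨j, h⟩
    rfl

/-- Counting bars with exactly one endpoint in a window: if `u < v` are not endpoints of any
interval of the barcode, the dimension of the homology of `C(B)^v / C(B)^u` equals the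
number of intervals with exactly one endpoint in `(u, v)`. -/
theorem stmt11 (F : Type) [Field F] (ι : Type) [Fintype ι] (I : ι → Bar)
    (hI : ∀ j, (I j).1 < (I j).2) (u v : ℝ) (huv : u < v)
    (hend : ∀ j, (I j).1 ≠ (u : EReal) ∧ (I j).1 ≠ (v : EReal) ∧
      ((I j).2 ≠ ⊤ → ((I j).2 ≠ (u : EReal) ∧ (I j).2 ≠ (v : EReal)))) :
    Module.finrank F (relHomology F I hI u v) =
      (Finset.univ.filter fun j : ι =>
        Xor' ((u : EReal) < (I j).1 ∧ (I j).1 < (v : EReal))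
          ((I j).2 ≠ ⊤ ∧ (u : EReal) < (I j).2 ∧ (I j).2 < (v : EReal))).card := by
    classical
  -- ∂̄ ∘ ∂̄ = 0
  have hbb : ∀ x, relBnd F I hI u v (relBnd F I hI u v x) = 0 := by
    intro x
    obtain ⟨y, rfl⟩ := Submodule.Quotient.mk_surjective _ x
    show Submodule.Quotient.mk (bndRes F I hI v (bndRes F I hI v y)) = (0 : relCx F I u v)
    have hz : bndRes F I hI v (bndRes F I hI v y) = 0 := by
      apply Subtype.ext
      have h1 : ((bndRes F I hI v (bndRes F I hI v y)) : GenIdx I → F)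
          = bnd F I (bnd F I y.val) := rfl
      rw [h1]
      show bnd F I (bnd F I y.val) = 0
      funext g
      rw [bnd_apply]
      split_ifs with h
      · erw [bnd_apply]; rw [dif_neg]
        · rfl
        · rintro ⟨hc, -⟩
          simp at hc
      · rfl
    rw [hz, Submodule.Quotient.mk_zero]
  have hfin : Module.finrank F (relHomology F I hI u v)
      = Module.finrank F (relCx F I u v)
        - 2 * Module.finrank F ↥(LinearMap.range (relBnd F I hI u v)) :=
    finrank_homology_aux _ hbb
  have hcx : Module.finrank F (relCx F I u v) = Fintype.card (WGen I u v) := by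
    rw [(eEquiv F I u v).finrank_eq, Module.finrank_pi]
  have hrel : relBnd F I hI u v
      = (eEquiv F I u v).symm.toLinearMap ∘ₗ (Dw F I u v ∘ₗ (eEquiv F I u v).toLinearMap) := by
    rw [← eEquiv_comm F I hI u v]
    ext x
    simp
  have hrange : LinearMap.range (relBnd F I hI u v)
      = Submodule.map ((eEquiv F I u v).symm.toLinearMap) (LinearMap.range (Dw F I u v)) := by
    rw [hrel, LinearMap.range_comp, LinearMap.range_comp, LinearEquiv.range, Submodule.map_top]
  have hr1 : Module.finrank F ↥(LinearMap.range (relBnd F I hI u v))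
      = Module.finrank F ↥(LinearMap.range (Dw F I u v)) := by
    rw [hrange]
    exact (eEquiv F I u v).symm.finrank_map_eq _
  have hrkDw : Module.finrank F ↥(LinearMap.range (Dw F I u v)) = Fintype.card (TGen I u v) := by
    have h1 := LinearMap.finrank_range_add_finrank_ker (Dw F I u v)
    have h2 := LinearMap.finrank_range_add_finrank_ker (resT F I u v)
    rw [ker_Dw F I hI u v] at h1
    rw [LinearMap.range_eq_top.2 (resT_surj F I u v), finrank_top, Module.finrank_pi,
      Module.finrank_pi] at h2
    rw [Module.finrank_pi] at h1
    omega
  have hW : Fintype.card (WGen I u v)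
      = (Finset.univ.filter (Q1 I u v)).card + (Finset.univ.filter (Q2 I u v)).card := by
    rw [Fintype.card_congr (splitEquiv I u v), Fintype.card_sum,
      Fintype.card_subtype, Fintype.card_subtype]
  have hT : Fintype.card (TGen I u v)
      = (Finset.univ.filter (fun j => Q1 I u v j ∧ Q2 I u v j)).card := by
    rw [Fintype.card_congr (tEquiv I u v), Fintype.card_subtype]
  have hXor : (Finset.univ.filter fun j : ι =>
        Xor' ((u : EReal) < (I j).1 ∧ (I j).1 < (v : EReal))
          ((I j).2 ≠ ⊤ ∧ (u : EReal) < (I j).2 ∧ (I j).2 < (v : EReal)))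
      = Finset.univ.filter (fun j => Xor' (Q1 I u v j) (Q2 I u v j)) := by
    apply Finset.filter_congr
    intro j _
    have e1 : ((u : EReal) < (I j).1 ∧ (I j).1 < (v : EReal)) ↔ Q1 I u v j := by
      rw [Q1]
      constructor
      · rintro ⟨h1, h2⟩; exact ⟨not_lt.2 h1.le, h2⟩
      · rintro ⟨h1, h2⟩; exact ⟨lt_of_le_of_ne (not_lt.1 h1) (Ne.symm (hend j).1), h2⟩
    have e2 : ((I j).2 ≠ ⊤ ∧ (u : EReal) < (I j).2 ∧ (I j).2 < (v : EReal)) ↔ Q2 I u v j := by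
      rw [Q2]
      constructor
      · rintro ⟨h0, h1, h2⟩; exact ⟨h0, not_lt.2 h1.le, h2⟩
      · rintro ⟨h0, h1, h2⟩
        exact ⟨h0, lt_of_le_of_ne (not_lt.1 h1) (Ne.symm ((hend j).2.2 h0).1), h2⟩
    rw [e1, e2]
  have ecomm : (Finset.univ.filter (fun j => Q1 I u v j ∧ Q2 I u v j))
      = (Finset.univ.filter (fun j => Q2 I u v j ∧ Q1 I u v j)) := by
    apply Finset.filter_congr
    intro j _
    rw [and_comm]
  have e12 : (Finset.univ.filter (fun j => Q1 I u v j ∧ Q2 I u v j)).card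
        + (Finset.univ.filter (fun j => Q1 I u v j ∧ ¬ Q2 I u v j)).card
      = (Finset.univ.filter (Q1 I u v)).card := by
    rw [← Finset.filter_filter, ← Finset.filter_filter]
    exact Finset.card_filter_add_card_filter_not (Q2 I u v)
  have e21 : (Finset.univ.filter (fun j => Q2 I u v j ∧ Q1 I u v j)).card
        + (Finset.univ.filter (fun j => Q2 I u v j ∧ ¬ Q1 I u v j)).card
      = (Finset.univ.filter (Q2 I u v)).card := by
    rw [← Finset.filter_filter, ← Finset.filter_filter]
    exact Finset.card_filter_add_card_filter_not (Q1 I u v)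
  have exor : (Finset.univ.filter (fun j => Xor' (Q1 I u v j) (Q2 I u v j))).card
      = (Finset.univ.filter (fun j => Q1 I u v j ∧ ¬ Q2 I u v j)).card
        + (Finset.univ.filter (fun j => Q2 I u v j ∧ ¬ Q1 I u v j)).card := by
    have h1 : Finset.univ.filter (fun j => Xor' (Q1 I u v j) (Q2 I u v j))
        = Finset.univ.filter
            (fun j => (Q1 I u v j ∧ ¬ Q2 I u v j) ∨ (Q2 I u v j ∧ ¬ Q1 I u v j)) := by
      apply Finset.filter_congr
      intro j _
      exact Iff.rfl
    rw [h1, Finset.filter_or]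
    apply Finset.card_union_of_disjoint
    rw [Finset.disjoint_left]
    intro a ha hb
    simp only [Finset.mem_filter] at ha hb
    exact ha.2.2 hb.2.1
  have hXc := congrArg Finset.card hXor
  have ecomm' := congrArg Finset.card ecomm
  omega
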